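/- Every continuous solution ξ : [0,1] → [0,1] of ξ ∘ f = f ∘ ξ, where f is the tent map, is linear on some nondegenerate subinterval of [0,1]. -/

import Mathlib

noncomputable def tent (x : ℝ) : ℝ := 1 - |2 * x - 1|



lemma tent_left {x : ℝ} (h1 : x ≤ 1/2) : tent x = 2 * x := by
  unfold tent; rw [abs_of_nonpos (by linarith)]; ring

lemma tent_right {x : ℝ} (h1 : 1/2 ≤ x) : tent x = 2 - 2 * x := by
  unfold tent; rw [abs_of_nonneg (by linarith)]; ring

/-- The lap formula. -/
lemma tent_iter_lap : ∀ (n : ℕ) (k : ℕ), k < 2^(n+1) → ∀ t : ℝ,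
    (k:ℝ)/2^(n+1) ≤ t → t ≤ ((k:ℝ)+1)/2^(n+1) →
    tent^[n+1] t = if Even k then 2^(n+1) * t - k else ((k:ℝ)+1) - 2^(n+1) * t := by
  intro n
  induction n with
  | zero =>
    intro k hk t ht1 ht2
    interval_cases k
    · simp only [if_pos (by decide : Even 0)]
      push_cast at ht1 ht2 ⊢
      rw [Function.iterate_one, tent_left (by linarith)]
      ring
    · simp only [if_neg (by decide : ¬ Even 1)]
      push_cast at ht1 ht2 ⊢
      rw [Function.iterate_one, tent_right (by linarith)]
      ring
  | succ n ih =>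
    intro k hk t ht1 ht2
    have h2 : (0:ℝ) < 2^(n+1) := by positivity
    have h22 : (0:ℝ) < 2^(n+2) := by positivity
    have hpow : (2:ℝ)^(n+2) = 2 * 2^(n+1) := by ring
    rw [div_le_iff₀ h22] at ht1
    rw [le_div_iff₀ h22] at ht2
    rw [Function.iterate_succ_apply]
    rcases lt_or_ge k (2^(n+1)) with hks | hks
    · -- left half
      have hkR : (k:ℝ) + 1 ≤ 2^(n+1) := by
        have h' : (k:ℕ) + 1 ≤ 2^(n+1) := Nat.succ_le_of_lt hks
        exact_mod_cast h'
      have htle : t ≤ 1/2 := by nlinarith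
      rw [tent_left htle]
      have hb1 : (k:ℝ)/2^(n+1) ≤ 2*t := by rw [div_le_iff₀ h2]; nlinarith
      have hb2 : 2*t ≤ ((k:ℝ)+1)/2^(n+1) := by rw [le_div_iff₀ h2]; nlinarith
      rw [ih k hks (2*t) hb1 hb2]
      by_cases hke : Even k
      · rw [if_pos hke, if_pos hke]; ring
      · rw [if_neg hke, if_neg hke]; ring
    · -- right half
      have hkR : (2:ℝ)^(n+1) ≤ (k:ℝ) := by exact_mod_cast hks
      have hk2 : k < 2^(n+2) := hk
      have p1 : (2:ℕ)^(n+2) = 2*2^(n+1) := by ring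
      have p2 : (1:ℕ) ≤ 2^(n+1) := Nat.one_le_two_pow
      set k' : ℕ := 2^(n+2) - 1 - k with hk'def
      have hk'cast : (k':ℝ) = 2^(n+2) - 1 - (k:ℝ) := by
        have hh : k' = 2^(n+2) - (1+k) := by omega
        rw [hh, Nat.cast_sub (by omega : 1 + k ≤ 2^(n+2))]
        push_cast; ring
      have hk's : k' < 2^(n+1) := by omega
      have htge : 1/2 ≤ t := by nlinarith
      rw [tent_right htge]
      have hb1 : (k':ℝ)/2^(n+1) ≤ 2 - 2*t := by
        rw [div_le_iff₀ h2, hk'cast]; nlinarith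
      have hb2 : 2 - 2*t ≤ ((k':ℝ)+1)/2^(n+1) := by
        rw [le_div_iff₀ h2, hk'cast]; nlinarith
      rw [ih k' hk's (2 - 2*t) hb1 hb2]
      have hsum : k' + k = 2^(n+2) - 1 := by omega
      have hodd : Odd (2^(n+2) - 1) :=
        Nat.Even.sub_odd (Nat.one_le_two_pow) ⟨2^(n+1), by ring⟩ odd_one
      have hparity : ¬ (Even k' ↔ Even k) := by
        intro hiff
        have he : Even (k' + k) := Nat.even_add.mpr hiff
        rw [hsum] at he
        exact ((Nat.not_even_iff_odd.mpr hodd)) he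
      by_cases hke : Even k
      · have hko : ¬ Even k' := fun h => hparity (iff_of_true h hke)
        rw [if_neg hko, if_pos hke, hk'cast]; push_cast; ring
      · have hko : Even k' := by
          by_contra hko
          exact hparity (iff_of_false hko hke)
        rw [if_pos hko, if_neg hke, hk'cast]; push_cast; ring





lemma tent_zero : tent 0 = 0 := by rw [tent_left (by norm_num)]; ring
lemma tent_one : tent 1 = 0 := by rw [tent_right (by norm_num)]; ring

lemma tent_iter_zero (n : ℕ) : tent^[n] 0 = 0 := by
  induction n with
  | zero => simp
  | succ n ih => rw [Function.iterate_succ_apply', ih, tent_zero]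

lemma tent_iter_one (n : ℕ) : tent^[n+1] 1 = 0 := by
  rw [Function.iterate_succ_apply, tent_one, tent_iter_zero]

lemma tent_mem {x : ℝ} (hx : x ∈ Set.Icc (0:ℝ) 1) : tent x ∈ Set.Icc (0:ℝ) 1 := by
  obtain ⟨h0, h1⟩ := hx
  rcases le_or_gt x (1/2) with h | h
  · rw [tent_left h]; constructor <;> linarith
  · rw [tent_right h.le]; constructor <;> linarith

lemma tent_iter_mem {x : ℝ} (hx : x ∈ Set.Icc (0:ℝ) 1) (n : ℕ) :
    tent^[n] x ∈ Set.Icc (0:ℝ) 1 := by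
  induction n with
  | zero => simpa using hx
  | succ n ih => rw [Function.iterate_succ_apply']; exact tent_mem ih

/-- Values of iterates at grid points: 0 at even numerators, 1 at odd ones. -/
lemma tent_iter_grid (n : ℕ) (j : ℕ) (hj : j ≤ 2^(n+1)) :
    tent^[n+1] ((j:ℝ)/2^(n+1)) = if Even j then 0 else 1 := by
  have h2 : (0:ℝ) < 2^(n+1) := by positivity
  rcases eq_or_lt_of_le hj with he | hlt
  · -- j = 2^(n+1), point = 1
    subst he
    have hx : ((2^(n+1) : ℕ) : ℝ)/2^(n+1) = 1 := by
      push_cast; field_simp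
    rw [hx, tent_iter_one]
    rw [if_pos ⟨2^n, by ring⟩]
  · rw [tent_iter_lap n j hlt ((j:ℝ)/2^(n+1)) le_rfl
      (by gcongr; linarith)]
    by_cases hje : Even j
    · rw [if_pos hje, if_pos hje]; field_simp; ring
    · rw [if_neg hje, if_neg hje]; field_simp; ring




section Main
variable (ξ : ℝ → ℝ)
    (hmaps : Set.MapsTo ξ (Set.Icc 0 1) (Set.Icc 0 1))
    (hcomm : ∀ x ∈ Set.Icc (0:ℝ) 1, ξ (tent x) = tent (ξ x))

include hmaps hcomm in
lemma comm_iter : ∀ (n : ℕ), ∀ x ∈ Set.Icc (0:ℝ) 1, ξ (tent^[n] x) = tent^[n] (ξ x) := by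
  intro n
  induction n with
  | zero => intro x _; simp
  | succ n ih =>
    intro x hx
    rw [Function.iterate_succ_apply, Function.iterate_succ_apply]
    rw [ih (tent x) (tent_mem hx), hcomm x hx]

include hmaps hcomm in
/-- ξ 0 is a fixed point of the tent map, hence 3·ξ 0 ∈ {0, 2}. -/
lemma fixed_zero : 3 * ξ 0 = 0 ∨ 3 * ξ 0 = 2 := by
  have h0 : (0:ℝ) ∈ Set.Icc (0:ℝ) 1 := by constructor <;> norm_num
  have hz : ξ 0 = tent (ξ 0) := by
    have := hcomm 0 h0
    rwa [tent_zero] at this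
  have hzm : ξ 0 ∈ Set.Icc (0:ℝ) 1 := hmaps h0
  rcases le_or_gt (ξ 0) (1/2) with h | h
  · left; rw [tent_left h] at hz; linarith
  · right; rw [tent_right h.le] at hz; linarith

include hmaps hcomm in
/-- Grid points map into the lattice (1/(3·2^(n+1)))·ℤ. -/
lemma lattice (n : ℕ) (k : ℕ) (hk : k ≤ 2^n) :
    ∃ M : ℤ, (M:ℝ) = 3 * 2^(n+1) * ξ ((k:ℝ)/2^n) := by
  have h2 : (0:ℝ) < 2^n := by positivity
  have h21 : (0:ℝ) < 2^(n+1) := by positivity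
  have hxm : (k:ℝ)/2^n ∈ Set.Icc (0:ℝ) 1 := by
    constructor
    · positivity
    · rw [div_le_one h2]; exact_mod_cast hk
  -- tent^[n+1] (k/2^n) = 0 : it is the grid point 2k/2^(n+1) with even numerator
  have hgz : tent^[n+1] ((k:ℝ)/2^n) = 0 := by
    have he : (k:ℝ)/2^n = ((2*k : ℕ):ℝ)/2^(n+1) := by
      push_cast; rw [div_eq_div_iff h2.ne' h21.ne']; ring
    rw [he, tent_iter_grid n (2*k) (by omega : 2*k ≤ 2^(n+1))]
    rw [if_pos ⟨k, by ring⟩]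
  -- hence tent^[n+1] (ξ (k/2^n)) = ξ 0
  set v : ℝ := ξ ((k:ℝ)/2^n) with hv
  have hvm : v ∈ Set.Icc (0:ℝ) 1 := hmaps hxm
  have hkey : tent^[n+1] v = ξ 0 := by
    have := comm_iter ξ hmaps hcomm (n+1) ((k:ℝ)/2^n) hxm
    rw [hgz] at this
    exact this.symm
  -- find the lap containing v
  by_cases hv1 : v = 1
  · refine ⟨3 * 2^(n+1), ?_⟩
    rw [hv1]; push_cast; ring
  · have hvlt : v < 1 := lt_of_le_of_ne hvm.2 hv1
    set j : ℕ := ⌊v * 2^(n+1)⌋₊ with hj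
    have hjlt : j < 2^(n+1) := by
      have : v * 2^(n+1) < 2^(n+1) := by nlinarith [hvm.1]
      have h' : (j:ℝ) ≤ v * 2^(n+1) := Nat.floor_le (by nlinarith [hvm.1])
      have : (j:ℝ) < 2^(n+1) := lt_of_le_of_lt h' this
      exact_mod_cast this
    have hb1 : (j:ℝ)/2^(n+1) ≤ v := by
      rw [div_le_iff₀ h21]; exact Nat.floor_le (by nlinarith [hvm.1])
    have hb2 : v ≤ ((j:ℝ)+1)/2^(n+1) := by
      rw [le_div_iff₀ h21]
      exact le_of_lt (Nat.lt_floor_add_one (v * 2^(n+1)))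
    rw [tent_iter_lap n j hjlt v hb1 hb2] at hkey
    rcases fixed_zero ξ hmaps hcomm with hz | hz <;> by_cases hje : Even j
    · rw [if_pos hje] at hkey
      exact ⟨3*j, by push_cast; linarith⟩
    · rw [if_neg hje] at hkey
      exact ⟨3*j+3, by push_cast; linarith⟩
    · rw [if_pos hje] at hkey
      exact ⟨3*j+2, by push_cast; linarith⟩
    · rw [if_neg hje] at hkey
      exact ⟨3*j+1, by push_cast; linarith⟩
end Main




/-- Inner counting lemma: a chain of Q consecutive lattice values strictly inside the
value range of a lap forces Q·δ ≤ 1. -/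
lemma inner_count {ξ : ℝ → ℝ}
    (hcont : ContinuousOn ξ (Set.Icc 0 1))
    (hmaps : Set.MapsTo ξ (Set.Icc 0 1) (Set.Icc 0 1))
    (hcomm' : ∀ x ∈ Set.Icc (0:ℝ) 1, ξ (tent x) = tent (ξ x))
    {δ : ℝ} (hδ : 0 < δ)
    (hδ1 : ∀ u ∈ Set.Icc (0:ℝ) 1, ∀ w ∈ Set.Icc (0:ℝ) 1, |u - w| < δ → |ξ u - ξ w| < 1)
    (m : ℕ) (k : ℕ) (hk : k < 2^(m+1))
    (w : ℕ → ℤ) (Q : ℕ)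
    (hwcons : ∀ q, q < Q → w (q+1) = w q + 1 ∨ w (q+1) = w q - 1)
    (hwrange : ∀ q, q ≤ Q → 0 ≤ w q ∧ w q ≤ 2^(m+1))
    (hbtw : ∀ q, q ≤ Q →
      ((w q : ℝ)/2^(m+1)) ∈ Set.uIcc (ξ ((k:ℝ)/2^(m+1))) (ξ (((k:ℝ)+1)/2^(m+1))))
    (hbtw2 : ∀ q, q < Q →
      ((w q : ℝ)/2^(m+1)) ∈ Set.uIcc (ξ ((k:ℝ)/2^(m+1))) ((w (q+1) : ℝ)/2^(m+1))) :
    (Q:ℝ) * δ ≤ 1 := by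
  set n := m + 1 with hn
  have h2 : (0:ℝ) < 2^n := by positivity
  set l : ℝ := (k:ℝ)/2^n with hl
  set R : ℝ := ((k:ℝ)+1)/2^n with hR
  have hlR : l ≤ R := by
    rw [hl, hR]; gcongr; linarith
  have hRl : R - l = 1/2^n := by rw [hl, hR]; ring
  have hlmem : l ∈ Set.Icc (0:ℝ) 1 := by
    constructor
    · positivity
    · rw [hl, div_le_one h2]
      have : (k:ℝ) ≤ 2^n := by exact_mod_cast hk.le
      linarith
  have hRmem : R ∈ Set.Icc (0:ℝ) 1 := by
    constructor
    · rw [hR]; positivity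
    · rw [hR, div_le_one h2]
      exact_mod_cast hk
  have hsub : Set.Icc l R ⊆ Set.Icc (0:ℝ) 1 := Set.Icc_subset_Icc hlmem.1 hRmem.2
  have hcsub : ContinuousOn ξ (Set.Icc l R) := hcont.mono hsub
  -- the level sets and first hitting points
  set v : ℕ → ℝ := fun q => (w q : ℝ)/2^n with hv
  set S : ℕ → Set ℝ := fun q => Set.Icc l R ∩ ξ ⁻¹' {v q} with hS
  have hScpt : ∀ q, IsCompact (S q) := by
    intro q
    apply IsCompact.of_isClosed_subset isCompact_Icc
    · exact hcsub.preimage_isClosed_of_isClosed isClosed_Icc isClosed_singleton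
    · exact Set.inter_subset_left
  have hSne : ∀ q, q ≤ Q → (S q).Nonempty := by
    intro q hq
    have := intermediate_value_uIcc (α := ℝ) (δ := ℝ) (a := l) (b := R) (f := ξ)
      (by rwa [Set.uIcc_of_le hlR])
    have hmem := this (hbtw q hq)
    obtain ⟨t, ht1, ht2⟩ := hmem
    rw [Set.uIcc_of_le hlR] at ht1
    exact ⟨t, ht1, ht2⟩
  set τ : ℕ → ℝ := fun q => sInf (S q) with hτ
  have hτmem : ∀ q, q ≤ Q → τ q ∈ Set.Icc l R ∧ ξ (τ q) = v q := by
    intro q hq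
    have := (hScpt q).sInf_mem (hSne q hq)
    exact ⟨this.1, this.2⟩
  -- ordering
  have horder : ∀ q, q < Q → τ q ≤ τ (q+1) := by
    intro q hq
    obtain ⟨hm1, he1⟩ := hτmem (q+1) hq
    have hlτ : l ≤ τ (q+1) := hm1.1
    have hsub2 : Set.uIcc l (τ (q+1)) ⊆ Set.Icc l R := by
      rw [Set.uIcc_of_le hlτ]
      exact Set.Icc_subset_Icc le_rfl hm1.2
    have hIVT := intermediate_value_uIcc (α := ℝ) (δ := ℝ) (a := l) (b := τ (q+1)) (f := ξ)
      (hcsub.mono hsub2)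
    have hmem : v q ∈ Set.uIcc (ξ l) (ξ (τ (q+1))) := by
      rw [he1]; exact hbtw2 q hq
    obtain ⟨t, ht1, ht2⟩ := hIVT hmem
    rw [Set.uIcc_of_le hlτ] at ht1
    have htS : t ∈ S q := ⟨hsub2 (by rw [Set.uIcc_of_le hlτ]; exact ht1), ht2⟩
    have : τ q ≤ t := csInf_le (hScpt q).bddBelow htS
    exact this.trans ht1.2
  -- the alternation/gap step
  have hgap : ∀ q, q < Q → δ/2^n ≤ τ (q+1) - τ q := by
    intro q hq
    obtain ⟨hm0, he0⟩ := hτmem q hq.le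
    obtain ⟨hm1, he1⟩ := hτmem (q+1) hq
    -- values of tent^[n] at τ q, τ (q+1)
    set y0 : ℝ := tent^[n] (τ q) with hy0
    set y1 : ℝ := tent^[n] (τ (q+1)) with hy1
    have hy0mem : y0 ∈ Set.Icc (0:ℝ) 1 := tent_iter_mem (hsub hm0) n
    have hy1mem : y1 ∈ Set.Icc (0:ℝ) 1 := tent_iter_mem (hsub hm1) n
    -- ξ at y's via commuting and grid values
    have hval : ∀ q', q' ≤ Q → ξ (tent^[n] (τ q')) =
        if Even (w q').toNat then 0 else 1 := by
      intro q' hq'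
      obtain ⟨hmq, heq⟩ := hτmem q' hq'
      rw [comm_iter ξ hmaps hcomm' n (τ q') (hsub hmq), heq]
      have hcast : v q' = (((w q').toNat : ℕ) : ℝ)/2^n := by
        simp only [hv]
        congr 1
        exact_mod_cast (Int.toNat_of_nonneg (hwrange q' hq').1).symm
      rw [hcast]
      apply tent_iter_grid m
      have h1 := (hwrange q' hq').2
      have : ((w q').toNat : ℤ) ≤ 2^(m+1) := by
        rw [Int.toNat_of_nonneg (hwrange q' hq').1]; exact h1
      exact_mod_cast this
    have hv0 := hval q hq.le
    have hv1 := hval (q+1) hq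
    -- parity alternation
    have hpar : Even (w (q+1)).toNat ↔ ¬ Even (w q).toNat := by
      have h0 := (hwrange q hq.le).1
      have h1 := (hwrange (q+1) hq).1
      rw [← Int.even_coe_nat, ← Int.even_coe_nat,
        Int.toNat_of_nonneg h0, Int.toNat_of_nonneg h1]
      rcases hwcons q hq with h | h
      · rw [h, Int.even_add_one]
      · rw [h, Int.even_sub_one]
    -- |ξ y1 - ξ y0| = 1
    have hdiff1 : |ξ (tent^[n] (τ (q+1))) - ξ (tent^[n] (τ q))| = 1 := by
      rw [hv0, hv1]
      by_cases he : Even (w q).toNat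
      · rw [if_pos he, if_neg (by rw [hpar]; exact fun h => h he)]
        norm_num
      · rw [if_neg he, if_pos (hpar.mpr he)]
        norm_num
    -- hence |y1 - y0| ≥ δ
    have hyg : δ ≤ |y1 - y0| := by
      by_contra hcon
      push_neg at hcon
      have := hδ1 y1 hy1mem y0 hy0mem hcon
      rw [hy0, hy1] at this
      rw [hdiff1] at this
      exact lt_irrefl 1 this
    -- |y1 - y0| = 2^n (τ(q+1) - τ q)
    have hyd : |y1 - y0| = 2^n * (τ (q+1) - τ q) := by
      have hlap0 := tent_iter_lap m k hk (τ q) hm0.1 hm0.2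
      have hlap1 := tent_iter_lap m k hk (τ (q+1)) hm1.1 hm1.2
      have hord := horder q hq
      rw [hy0, hy1, hlap0, hlap1]
      by_cases hke : Even k
      · rw [if_pos hke, if_pos hke]
        rw [abs_of_nonneg (by nlinarith)]
        ring
      · rw [if_neg hke, if_neg hke]
        rw [abs_of_nonpos (by nlinarith)]
        ring
    rw [hyd] at hyg
    rw [div_le_iff₀ h2]
    linarith [hyg]
  -- accumulate
  have haccum : ∀ q, q ≤ Q → τ 0 + q * (δ/2^n) ≤ τ q := by
    intro q
    induction q with
    | zero => intro _; simp
    | succ q ih =>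
      intro hq
      have h1 := ih (Nat.le_of_succ_le hq)
      have h2' := hgap q hq
      push_cast
      linarith
  have hfin := haccum Q le_rfl
  have hτ0 : l ≤ τ 0 := (hτmem 0 (Nat.zero_le _)).1.1
  have hτQ : τ Q ≤ R := (hτmem Q le_rfl).1.2
  have : (Q:ℝ) * (δ/2^n) ≤ 1/2^n := by linarith
  calc (Q:ℝ) * δ = ((Q:ℝ) * (δ/2^n)) * 2^n := by field_simp
  _ ≤ (1/2^n) * 2^n := by gcongr
  _ = 1 := by field_simp




/-- The key quantitative bound on dyadic grid increments. -/
lemma grid_step {ξ : ℝ → ℝ}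
    (hcont : ContinuousOn ξ (Set.Icc 0 1))
    (hmaps : Set.MapsTo ξ (Set.Icc 0 1) (Set.Icc 0 1))
    (hcomm' : ∀ x ∈ Set.Icc (0:ℝ) 1, ξ (tent x) = tent (ξ x))
    {δ : ℝ} (hδ : 0 < δ)
    (hδ1 : ∀ u ∈ Set.Icc (0:ℝ) 1, ∀ w ∈ Set.Icc (0:ℝ) 1, |u - w| < δ → |ξ u - ξ w| < 1) :
    ∀ (n k : ℕ), k < 2^n →
      |ξ (((k:ℝ)+1)/2^n) - ξ ((k:ℝ)/2^n)| ≤ (2 + 1/δ)/2^n := by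
  intro n
  match n with
  | 0 =>
    intro k hk
    interval_cases k
    have h0 : (0:ℝ) ∈ Set.Icc (0:ℝ) 1 := by norm_num
    have h1 : (1:ℝ) ∈ Set.Icc (0:ℝ) 1 := by norm_num
    have hm0 := hmaps h0
    have hm1 := hmaps h1
    simp only [Set.mem_Icc] at hm0 hm1
    have hip : (0:ℝ) < δ⁻¹ := inv_pos.mpr hδ
    rw [abs_le]
    push_cast
    constructor <;> simp <;> linarith
  | (m+1) =>
    intro k hk
    set n := m + 1 with hn
    have h2 : (0:ℝ) < 2^n := by positivity
    set l : ℝ := (k:ℝ)/2^n with hl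
    set R : ℝ := ((k:ℝ)+1)/2^n with hR
    have hlmem : l ∈ Set.Icc (0:ℝ) 1 := by
      constructor
      · positivity
      · rw [hl, div_le_one h2]
        have : (k:ℝ) ≤ 2^n := by exact_mod_cast hk.le
        linarith
    have hRmem : R ∈ Set.Icc (0:ℝ) 1 := by
      constructor
      · rw [hR]; positivity
      · rw [hR, div_le_one h2]
        exact_mod_cast hk
    set a : ℝ := ξ l with ha
    set b : ℝ := ξ R with hb
    have hamem : a ∈ Set.Icc (0:ℝ) 1 := hmaps hlmem
    have hbmem : b ∈ Set.Icc (0:ℝ) 1 := hmaps hRmem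
    by_contra hcon
    push_neg at hcon
    set m1 : ℝ := min a b with hm1
    set M1 : ℝ := max a b with hM1
    have hdiff : M1 - m1 = |b - a| := by
      rcases le_total a b with h | h
      · rw [hm1, hM1, min_eq_left h, max_eq_right h, abs_of_nonneg (by linarith)]
      · rw [hm1, hM1, min_eq_right h, max_eq_left h, abs_of_nonpos (by linarith)]; ring
    have hm1nn : 0 ≤ m1 := le_min hamem.1 hbmem.1
    have hM1le : M1 ≤ 1 := max_le hamem.2 hbmem.2
    set j₁ : ℤ := ⌊m1 * 2^n⌋ + 1 with hj₁
    set j₂ : ℤ := ⌈M1 * 2^n⌉ - 1 with hj₂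
    have hj1lb : m1 * 2^n < (j₁:ℝ) := by
      rw [hj₁]; push_cast; exact Int.lt_floor_add_one _
    have hj2ub : (j₂:ℝ) < M1 * 2^n := by
      rw [hj₂]; push_cast
      have := Int.ceil_lt_add_one (M1 * 2^n)
      linarith
    have hj1pos : 1 ≤ j₁ := by
      rw [hj₁]
      have : (0:ℤ) ≤ ⌊m1 * 2^n⌋ := Int.floor_nonneg.mpr (by positivity)
      omega
    have hj2leZ : j₂ ≤ 2^n - 1 := by
      have h' : (j₂:ℝ) < 2^n := lt_of_lt_of_le hj2ub (by nlinarith)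
      have h'' : (j₂:ℝ) < ((2^n : ℤ) : ℝ) := by push_cast; linarith
      have : j₂ < (2^n : ℤ) := by exact_mod_cast h''
      omega
    have hj1ub : (j₁:ℝ) ≤ m1 * 2^n + 1 := by
      rw [hj₁]; push_cast
      have := Int.floor_le (m1 * 2^n)
      linarith
    have hj2lb : M1 * 2^n - 1 ≤ (j₂:ℝ) := by
      rw [hj₂]; push_cast
      have := Int.le_ceil (M1 * 2^n)
      linarith
    have hKgap : 1/δ < (j₂:ℝ) - j₁ := by
      have hABS : (2 + 1/δ)/2^n < M1 - m1 := by rw [hdiff]; exact hcon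
      have : 2 + 1/δ < (M1 - m1) * 2^n := by
        rw [div_lt_iff₀ h2] at hABS; linarith
      nlinarith
    have hj12 : j₁ ≤ j₂ := by
      have h1 : (0:ℝ) < (j₂:ℝ) - j₁ := lt_trans (by positivity) hKgap
      have h2' : (j₁:ℝ) < j₂ := by linarith
      exact_mod_cast h2'.le
    set Q : ℕ := (j₂ - j₁).toNat with hQ
    have hQZ : (Q:ℤ) = j₂ - j₁ := Int.toNat_of_nonneg (by omega)
    have hQcast : (Q:ℝ) = (j₂:ℝ) - j₁ := by exact_mod_cast hQZ
    have hgt : 1 < (Q:ℝ) * δ := by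
      rw [hQcast]
      rw [div_lt_iff₀ hδ] at hKgap
      linarith
    rcases lt_or_ge a b with hab | hba
    · -- increasing case
      have hmm : m1 = a := min_eq_left hab.le
      have hMM : M1 = b := max_eq_right hab.le
      set w : ℕ → ℤ := fun q => j₁ + q with hw
      have hwub : ∀ q : ℕ, q ≤ Q → (w q : ℝ) ≤ j₂ := by
        intro q hq
        have hqZ : (q:ℤ) ≤ (Q:ℤ) := by exact_mod_cast hq
        have : w q ≤ j₂ := by simp only [hw]; omega
        exact_mod_cast this
      have hwlb : ∀ q : ℕ, (j₁:ℝ) ≤ (w q : ℝ) := by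
        intro q
        have : j₁ ≤ w q := by simp only [hw]; omega
        exact_mod_cast this
      have hla : ∀ q : ℕ, q ≤ Q → a ≤ (w q : ℝ)/2^n := by
        intro q hq
        rw [le_div_iff₀ h2]
        have := hwlb q
        rw [← hmm]
        linarith [hj1lb]
      have hub : ∀ q : ℕ, q ≤ Q → (w q : ℝ)/2^n ≤ b := by
        intro q hq
        rw [div_le_iff₀ h2]
        have := hwub q hq
        rw [← hMM]
        linarith [hj2ub]
      have key := inner_count hcont hmaps hcomm' hδ hδ1 m k hk w Q
        (fun q _ => Or.inl (by simp only [hw]; push_cast; ring))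
        (fun q hq => by
          have hqZ : (q:ℤ) ≤ (Q:ℤ) := by exact_mod_cast hq
          have he : (2:ℤ)^(m+1) = 2^n := by rw [hn]
          constructor
          · simp only [hw]; omega
          · simp only [hw]; omega)
        (fun q hq => by
          rw [Set.uIcc_of_le hab.le, Set.mem_Icc]
          exact ⟨hla q hq, hub q hq⟩)
        (fun q hq => by
          have hq1 : q + 1 ≤ Q := hq
          have h1 : a ≤ (w (q+1) : ℝ)/2^n := hla (q+1) hq1
          rw [Set.uIcc_of_le h1, Set.mem_Icc]
          refine ⟨hla q hq.le, ?_⟩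
          gcongr
          have : w q ≤ w (q+1) := by simp only [hw]; omega
          exact_mod_cast this)
      linarith
    · -- decreasing case (b ≤ a); note a ≠ b since |b - a| > 0
      have hmm : m1 = b := min_eq_right hba
      have hMM : M1 = a := max_eq_left hba
      set w : ℕ → ℤ := fun q => j₂ - q with hw
      have hwub : ∀ q : ℕ, (w q : ℝ) ≤ j₂ := by
        intro q
        have : w q ≤ j₂ := by simp only [hw]; omega
        exact_mod_cast this
      have hwlb : ∀ q : ℕ, q ≤ Q → (j₁:ℝ) ≤ (w q : ℝ) := by
        intro q hq
        have hqZ : (q:ℤ) ≤ (Q:ℤ) := by exact_mod_cast hq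
        have : j₁ ≤ w q := by simp only [hw]; omega
        exact_mod_cast this
      have hlb : ∀ q : ℕ, q ≤ Q → b ≤ (w q : ℝ)/2^n := by
        intro q hq
        rw [le_div_iff₀ h2]
        have := hwlb q hq
        rw [← hmm]
        linarith [hj1lb]
      have hub : ∀ q : ℕ, q ≤ Q → (w q : ℝ)/2^n ≤ a := by
        intro q hq
        rw [div_le_iff₀ h2]
        have := hwub q
        rw [← hMM]
        linarith [hj2ub]
      have key := inner_count hcont hmaps hcomm' hδ hδ1 m k hk w Q
        (fun q _ => Or.inr (by simp only [hw]; push_cast; ring))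
        (fun q hq => by
          have hqZ : (q:ℤ) ≤ (Q:ℤ) := by exact_mod_cast hq
          have he : (2:ℤ)^(m+1) = 2^n := by rw [hn]
          constructor
          · simp only [hw]; omega
          · simp only [hw]; omega)
        (fun q hq => by
          rw [Set.uIcc_comm, Set.uIcc_of_le hba, Set.mem_Icc]
          exact ⟨hlb q hq, hub q hq⟩)
        (fun q hq => by
          have hq1 : q + 1 ≤ Q := hq
          have h1 : (w (q+1) : ℝ)/2^n ≤ a := hub (q+1) hq1
          rw [Set.uIcc_comm, Set.uIcc_of_le h1, Set.mem_Icc]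
          refine ⟨?_, hub q hq.le⟩
          gcongr
          have : w (q+1) ≤ w q := by simp only [hw]; omega
          exact_mod_cast this)
      linarith





theorem exists_interval_of_linearity (ξ : ℝ → ℝ)
    (hcont : ContinuousOn ξ (Set.Icc 0 1))
    (hmaps : Set.MapsTo ξ (Set.Icc 0 1) (Set.Icc 0 1))
    (hcomm : ∀ x ∈ Set.Icc (0:ℝ) 1, ξ (tent x) = tent (ξ x)) :
    ∃ a b : ℝ, 0 ≤ a ∧ a < b ∧ b ≤ 1 ∧
      ∃ c d : ℝ, ∀ x ∈ Set.Icc a b, ξ x = c * x + d := by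
  classical
  -- uniform continuity with ε = 1
  have hucont : UniformContinuousOn ξ (Set.Icc 0 1) :=
    isCompact_Icc.uniformContinuousOn_of_continuous hcont
  obtain ⟨δ, hδ, hδ1⟩ := (Metric.uniformContinuousOn_iff).mp hucont 1 (by norm_num)
  have hδ1' : ∀ u ∈ Set.Icc (0:ℝ) 1, ∀ w ∈ Set.Icc (0:ℝ) 1, |u - w| < δ → |ξ u - ξ w| < 1 := by
    intro u hu w hw h
    have := hδ1 u hu w hw (by rwa [Real.dist_eq])
    rwa [Real.dist_eq] at this
  -- integer increments
  have hdiffZ : ∀ (n k : ℕ), k < 2^n →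
      ∃ D : ℤ, (D:ℝ) = 6 * 2^n * (ξ (((k:ℝ)+1)/2^n) - ξ ((k:ℝ)/2^n)) := by
    intro n k hk
    obtain ⟨M₁, hM₁⟩ := lattice ξ hmaps hcomm n k hk.le
    obtain ⟨M₂, hM₂⟩ := lattice ξ hmaps hcomm n (k+1) hk
    have hcastarg : ((k+1 : ℕ):ℝ) = (k:ℝ)+1 := by push_cast; ring
    rw [hcastarg] at hM₂
    refine ⟨M₂ - M₁, ?_⟩
    push_cast
    rw [hM₁, hM₂]
    ring
  -- the grid bound
  have hKbd := grid_step hcont hmaps hcomm hδ hδ1'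
  -- the set of realized increment sizes
  set P : ℕ → Prop := fun q => ∃ (n k : ℕ), k < 2^n ∧
      (q:ℝ) = |6 * 2^n * (ξ (((k:ℝ)+1)/2^n) - ξ ((k:ℝ)/2^n))| with hP
  set B : ℕ := ⌈(6:ℝ) * (2 + 1/δ)⌉₊ with hB
  have hPbound : ∀ q, P q → q ≤ B := by
    intro q hq
    obtain ⟨n, k, hk, hqe⟩ := hq
    have h2 : (0:ℝ) < 2^n := by positivity
    have hb := hKbd n k hk
    have : (q:ℝ) ≤ 6 * (2 + 1/δ) := by
      rw [hqe, abs_mul, abs_of_nonneg (by positivity : (0:ℝ) ≤ 6 * 2^n)]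
      calc 6 * 2^n * |ξ (((k:ℝ)+1)/2^n) - ξ ((k:ℝ)/2^n)| ≤ 6 * 2^n * ((2 + 1/δ)/2^n) := by
            gcongr
      _ = 6 * (2 + 1/δ) := by field_simp
    have : (q:ℝ) ≤ (B:ℝ) := this.trans (Nat.le_ceil _)
    exact_mod_cast this
  -- a base witness
  obtain ⟨D₀, hD₀⟩ := hdiffZ 0 0 (by norm_num)
  have hPq₀ : P D₀.natAbs := by
    refine ⟨0, 0, by norm_num, ?_⟩
    rw [Nat.cast_natAbs, Int.cast_abs, hD₀]
  -- the maximal increment size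
  set qs : ℕ := Nat.findGreatest P B with hqs
  have hach : P qs := Nat.findGreatest_spec (hPbound _ hPq₀) hPq₀
  set S : ℝ := (qs:ℝ)/6 with hS
  have hSnn : 0 ≤ S := by positivity
  -- every grid increment is at most S/2^n
  have hgrid : ∀ (n k : ℕ), k < 2^n →
      |ξ (((k:ℝ)+1)/2^n) - ξ ((k:ℝ)/2^n)| ≤ S/2^n := by
    intro n k hk
    have h2 : (0:ℝ) < 2^n := by positivity
    obtain ⟨D, hD⟩ := hdiffZ n k hk
    have hPD : P D.natAbs := ⟨n, k, hk, by rw [Nat.cast_natAbs, Int.cast_abs, hD]⟩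
    have hle : D.natAbs ≤ qs := Nat.le_findGreatest (hPbound _ hPD) hPD
    have hleR : |(D:ℝ)| ≤ (qs:ℝ) := by
      rw [← Int.cast_abs, ← Nat.cast_natAbs]
      exact_mod_cast hle
    rw [hD] at hleR
    rw [abs_mul, abs_of_nonneg (by positivity : (0:ℝ) ≤ 6 * 2^n)] at hleR
    rw [hS, div_div]
    rw [le_div_iff₀ (by positivity)]
    linarith
  -- telescoping chain along the grid
  have hchain : ∀ (n c m : ℕ), c + m ≤ 2^n →
      |ξ (((c:ℝ)+(m:ℝ))/2^n) - ξ ((c:ℝ)/2^n)| ≤ (m:ℝ) * S / 2^n := by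
    intro n c m
    induction m with
    | zero => intro _; simp
    | succ m ih =>
      intro hcm
      have h1 := ih (by omega)
      have h2 := hgrid n (c+m) (by omega)
      have e2 : (((c+m : ℕ):ℝ)+1)/2^n = ((c:ℝ)+((m:ℝ)+1))/2^n := by push_cast; ring
      have e3 : ((c+m : ℕ):ℝ)/2^n = ((c:ℝ)+(m:ℝ))/2^n := by push_cast; ring
      rw [e2, e3] at h2
      have e4 : ((c:ℝ)+((m+1:ℕ):ℝ))/2^n = ((c:ℝ)+((m:ℝ)+1))/2^n := by push_cast; ring
      rw [e4]
      calc |ξ (((c:ℝ)+((m:ℝ)+1))/2^n) - ξ ((c:ℝ)/2^n)|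
          ≤ |ξ (((c:ℝ)+((m:ℝ)+1))/2^n) - ξ (((c:ℝ)+(m:ℝ))/2^n)|
            + |ξ (((c:ℝ)+(m:ℝ))/2^n) - ξ ((c:ℝ)/2^n)| := abs_sub_le _ _ _
      _ ≤ S/2^n + (m:ℝ) * S / 2^n := add_le_add h2 h1
      _ = ((m+1 : ℕ):ℝ) * S / 2^n := by push_cast; ring
  -- Lipschitz bound with constant S
  have hlip : ∀ x ∈ Set.Icc (0:ℝ) 1, ∀ y ∈ Set.Icc (0:ℝ) 1, x ≤ y →
      |ξ y - ξ x| ≤ S * (y - x) := by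
    intro x hx y hy hxy
    refine le_of_forall_pos_le_add ?_
    intro ε hε
    obtain ⟨δ₂, hδ₂, hδ₂1⟩ := (Metric.uniformContinuousOn_iff).mp hucont (ε/2) (by positivity)
    obtain ⟨n, hn⟩ := pow_unbounded_of_one_lt (1/δ₂) (by norm_num : (1:ℝ) < 2)
    have h2 : (0:ℝ) < 2^n := by positivity
    have hsmall' : (1:ℝ) < δ₂ * 2^n := by
      rw [div_lt_iff₀ hδ₂] at hn
      nlinarith
    set k₁ : ℕ := ⌈x * 2^n⌉₊ with hk₁
    set k₂ : ℕ := ⌊y * 2^n⌋₊ with hk₂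
    have hx0 : 0 ≤ x := hx.1
    have hy0 : 0 ≤ y := hy.1
    have hy1 : y ≤ 1 := hy.2
    have hx2 : x * 2^n ≤ k₁ := Nat.le_ceil _
    have hk₁lt : (k₁:ℝ) < x * 2^n + 1 := Nat.ceil_lt_add_one (mul_nonneg hx0 h2.le)
    have hk₂le : (k₂:ℝ) ≤ y * 2^n := Nat.floor_le (mul_nonneg hy0 h2.le)
    have hy2 : y * 2^n < (k₂:ℝ) + 1 := Nat.lt_floor_add_one _
    have hk₂ub : k₂ ≤ 2^n := by
      have h' : (k₂:ℝ) ≤ 2^n := hk₂le.trans (by nlinarith)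
      exact_mod_cast h'
    rcases lt_or_ge k₂ k₁ with hcase | hcase
    · -- x and y are within one grid cell
      have hk21 : (k₂:ℝ) + 1 ≤ k₁ := by exact_mod_cast hcase
      have h5 : (y - x) * 2^n < 1 := by rw [sub_mul]; linarith
      have h7 : y - x < δ₂ := by
        by_contra hcon
        push_neg at hcon
        have hmul := mul_le_mul_of_nonneg_right hcon h2.le
        linarith
      have hd := hδ₂1 y hy x hx (by rw [Real.dist_eq, abs_of_nonneg (by linarith)]; linarith)
      rw [Real.dist_eq] at hd
      have hSxy : 0 ≤ S * (y - x) := mul_nonneg hSnn (by linarith)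
      linarith
    · -- telescoping through grid points
      set p : ℝ := (k₁:ℝ)/2^n with hp
      set r : ℝ := (k₂:ℝ)/2^n with hr
      have hk12 : (k₁:ℝ) ≤ k₂ := by exact_mod_cast hcase
      have hpr : p ≤ r := by rw [hp, hr]; gcongr
      have hxp : x ≤ p := by rw [hp, le_div_iff₀ h2]; linarith
      have hry : r ≤ y := by rw [hr, div_le_iff₀ h2]; linarith
      have hpmem : p ∈ Set.Icc (0:ℝ) 1 := ⟨le_trans hx0 hxp, le_trans (hpr.trans hry) hy1⟩
      have hrmem : r ∈ Set.Icc (0:ℝ) 1 := ⟨le_trans hx0 (hxp.trans hpr), le_trans hry hy1⟩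
      have hpx2 : p * 2^n = k₁ := by rw [hp]; field_simp
      have hrx2 : r * 2^n = k₂ := by rw [hr]; field_simp
      have hdxp : |ξ p - ξ x| < ε/2 := by
        have h6 : (p - x) * 2^n < 1 := by rw [sub_mul, hpx2]; linarith
        have h7 : p - x < δ₂ := by
          by_contra hcon
          push_neg at hcon
          have hmul := mul_le_mul_of_nonneg_right hcon h2.le
          linarith
        have hdd := hδ₂1 p hpmem x hx
          (by rw [Real.dist_eq, abs_of_nonneg (by linarith)]; linarith)
        rwa [Real.dist_eq] at hdd
      have hdry : |ξ y - ξ r| < ε/2 := by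
        have h6 : (y - r) * 2^n < 1 := by rw [sub_mul, hrx2]; linarith
        have h7 : y - r < δ₂ := by
          by_contra hcon
          push_neg at hcon
          have hmul := mul_le_mul_of_nonneg_right hcon h2.le
          linarith
        have hdd := hδ₂1 y hy r hrmem
          (by rw [Real.dist_eq, abs_of_nonneg (by linarith)]; linarith)
        rwa [Real.dist_eq] at hdd
      have hmid : |ξ r - ξ p| ≤ S * (y - x) := by
        have hsubn : k₁ + (k₂ - k₁) ≤ 2^n := by omega
        have hc := hchain n k₁ (k₂ - k₁) hsubn
        have e7 : ((k₂ - k₁ : ℕ):ℝ) = (k₂:ℝ) - k₁ := by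
          push_cast [Nat.cast_sub hcase]; ring
        have e5 : ((k₁:ℝ) + ((k₂ - k₁ : ℕ):ℝ))/2^n = r := by
          rw [hr]; congr 1; rw [e7]; ring
        rw [e5] at hc
        have h8 : ((k₂:ℝ) - k₁) / 2^n ≤ y - x := by
          rw [div_le_iff₀ h2, sub_mul]; linarith
        calc |ξ r - ξ p| = |ξ r - ξ ((k₁:ℝ)/2^n)| := by rw [hp]
        _ ≤ ((k₂ - k₁:ℕ):ℝ) * S / 2^n := hc
        _ = S * (((k₂:ℝ) - k₁)/2^n) := by rw [e7]; ring
        _ ≤ S * (y - x) := mul_le_mul_of_nonneg_left h8 hSnn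
      have t1 := abs_sub_le (ξ y) (ξ r) (ξ x)
      have t2 := abs_sub_le (ξ r) (ξ p) (ξ x)
      linarith
  -- the achieving cell and the pinch
  obtain ⟨n₀, k₀, hk₀, hq⟩ := hach
  have h20 : (0:ℝ) < 2^n₀ := by positivity
  set α : ℝ := (k₀:ℝ)/2^n₀ with hα
  set β : ℝ := ((k₀:ℝ)+1)/2^n₀ with hβ
  have hαβ : α < β := by
    rw [hα, hβ, div_lt_div_iff_of_pos_right] <;> [linarith; exact h20]
  have hβα : β - α = 1/2^n₀ := by rw [hα, hβ]; ring
  have hα0 : 0 ≤ α := by positivity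
  have hβ1 : β ≤ 1 := by
    rw [hβ, div_le_one h20]; exact_mod_cast hk₀
  have hαmem : α ∈ Set.Icc (0:ℝ) 1 := ⟨hα0, le_of_lt (lt_of_lt_of_le hαβ hβ1)⟩
  have hβmem : β ∈ Set.Icc (0:ℝ) 1 := ⟨le_trans hα0 hαβ.le, hβ1⟩
  -- |ξ β - ξ α| = S * (β - α)
  have hABS : |ξ β - ξ α| = S * (β - α) := by
    have : (qs:ℝ) = 6 * 2^n₀ * |ξ β - ξ α| := by
      rw [hq, abs_mul, abs_of_nonneg (by positivity : (0:ℝ) ≤ 6 * 2^n₀)]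
    rw [hS, hβα, this]
    field_simp
  rcases abs_cases (ξ β - ξ α) with ⟨he, _⟩ | ⟨he, _⟩
  · -- increasing cell : slope S
    refine ⟨α, β, hα0, hαβ, hβ1, S, ξ α - S * α, ?_⟩
    intro x hxm
    have hx1 : x ∈ Set.Icc (0:ℝ) 1 :=
      ⟨le_trans hα0 hxm.1, le_trans hxm.2 hβ1⟩
    have hΔ : ξ β - ξ α = S * (β - α) := by rw [← he, hABS]
    have l1 := hlip α hαmem x hx1 hxm.1
    have l2 := hlip x hx1 β hβmem hxm.2
    have l1' := abs_le.mp l1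
    have l2' := abs_le.mp l2
    linarith [l1'.1, l1'.2, l2'.1, l2'.2]
  · -- decreasing cell : slope -S
    refine ⟨α, β, hα0, hαβ, hβ1, -S, ξ α + S * α, ?_⟩
    intro x hxm
    have hx1 : x ∈ Set.Icc (0:ℝ) 1 :=
      ⟨le_trans hα0 hxm.1, le_trans hxm.2 hβ1⟩
    have hΔ : ξ β - ξ α = -(S * (β - α)) := by
      have : -(ξ β - ξ α) = S * (β - α) := by rw [← he, hABS]
      linarith
    have l1 := hlip α hαmem x hx1 hxm.1
    have l2 := hlip x hx1 β hβmem hxm.2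
    have l1' := abs_le.mp l1
    have l2' := abs_le.mp l2
    linarith [l1'.1, l1'.2, l2'.1, l2'.2]
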